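/- Let (B, M, T) be a standard Young tableau of shape 3 × n with n ≥ 1 (so |B| = |M| = |T| = n, partitioning {1,…,3n}). Then 1 ∈ B; there is a unique a ∈ M with f₁(a) = 1; the set { t ∈ T : f₂(t) ≤ a } is nonempty, and letting x be its maximum, the triple B′ = { b − 1 : b ∈ (B \ {1}) ∪ {a} }, M′ = { m − 1 : m ∈ (M \ {a}) ∪ {x} }, T′ = { t − 1 : t ∈ T \ {x} } ∪ {3n} is again a standard Young tableau of shape 3 × n. (This triple is the jeu-de-taquin promotion of (B, M, T): after deleting 1, the entry a slides from the middle to the bottom row and x slides from the top to the middle row.) -/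

import Mathlib

open scoped Classical

set_option linter.unusedVariables false
set_option linter.deprecated false
set_option maxHeartbeats 1000000

/-- The `j`-th smallest element (0-indexed) of a finite set of naturals (default `0`). -/
noncomputable def nthSmallest (s : Finset ℕ) (j : ℕ) : ℕ := (s.sort (· ≤ ·)).getD j 0

/-- `(R, S)` satisfies the tableau condition: `|S| ≤ |R|` and for every `j ≤ |S|`, the `j`-th
smallest element of `S` is greater than the `j`-th smallest element of `R`. -/
def TableauCond (R S : Finset ℕ) : Prop :=
  S.card ≤ R.card ∧ ∀ j < S.card, nthSmallest R j < nthSmallest S j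

/-- The greedy matching of `S` into `R`: processing the elements `i` of `S` in increasing
order, `greedy R S i = max { j ∈ R : j < i and j ≠ greedy R S i' for every i' ∈ S with i' < i }`
(with value `0` when this set is empty or `i ∉ S`). -/
noncomputable def greedy (R S : Finset ℕ) (i : ℕ) : ℕ :=
  Nat.strongRecOn i fun i ih =>
    WithBot.unbotD 0 ((R.filter fun j => j < i ∧ ∀ i' (_ : i' ∈ S) (h : i' < i), j ≠ ih i' h).max)

/-- The arcs produced by the greedy matching of `S` into `R`, as ordered pairs
`(left endpoint, right endpoint)`. -/
noncomputable def arcsOf (R S : Finset ℕ) : Finset (ℕ × ℕ) :=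
  S.image fun i => (greedy R S i, i)

/-- `(B, M, T)` (bottom, middle, top rows) encodes a three-row standard Young tableau with
`N` boxes: the rows partition `{1,…,N}`, row lengths weakly decrease from bottom to top, and
consecutive rows satisfy the tableau condition. -/
def ThreeRowSYT (N : ℕ) (B M T : Finset ℕ) : Prop :=
  Disjoint B M ∧ Disjoint B T ∧ Disjoint M T ∧
  B ∪ M ∪ T = Finset.Icc 1 N ∧
  T.card ≤ M.card ∧ M.card ≤ B.card ∧
  TableauCond B M ∧ TableauCond M T

/-- Two arcs `(p,q)` and `(p',q')` (with `p<q`, `p'<q'`) cross if `p<p'<q<q'` or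
`p'<p<q'<q`. -/
def Cross (a b : ℕ × ℕ) : Prop :=
  (a.1 < b.1 ∧ b.1 < a.2 ∧ a.2 < b.2) ∨ (b.1 < a.1 ∧ a.1 < b.2 ∧ b.2 < a.2)

lemma nth_mem {A : Finset ℕ} {j : ℕ} (hj : j < A.card) : nthSmallest A j ∈ A := by
  rw [nthSmallest, List.getD_eq_getElem _ _ (by rwa [Finset.length_sort])]
  exact (Finset.mem_sort _).1 (List.getElem_mem _)

lemma nth_lt_nth {A : Finset ℕ} {i j : ℕ} (hij : i < j) (hj : j < A.card) :
    nthSmallest A i < nthSmallest A j := by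
  have hi : i < (A.sort (· ≤ ·)).length := by rw [Finset.length_sort]; omega
  have hj' : j < (A.sort (· ≤ ·)).length := by rwa [Finset.length_sort]
  rw [nthSmallest, nthSmallest, List.getD_eq_getElem _ _ hi, List.getD_eq_getElem _ _ hj']
  exact A.sortedLT_sort.strictMono_get (show (⟨i, hi⟩ : Fin _) < ⟨j, hj'⟩ from hij)

lemma nth_le_nth {A : Finset ℕ} {i j : ℕ} (hij : i ≤ j) (hj : j < A.card) :
    nthSmallest A i ≤ nthSmallest A j := by
  rcases eq_or_lt_of_le hij with rfl | h
  · exact le_rfl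
  · exact (nth_lt_nth h hj).le

lemma exists_nth {A : Finset ℕ} {b : ℕ} (hb : b ∈ A) : ∃ i < A.card, nthSmallest A i = b := by
  have : b ∈ A.sort (· ≤ ·) := (Finset.mem_sort _).2 hb
  obtain ⟨⟨i, hi⟩, hgi⟩ := List.mem_iff_get.1 this
  refine ⟨i, by rwa [Finset.length_sort] at hi, ?_⟩
  rw [nthSmallest, List.getD_eq_getElem _ _ hi]; exact hgi

/-- direction B -/

lemma le_filter_card {A : Finset ℕ} {j x : ℕ} (hj : j < A.card) (h : nthSmallest A j < x) :
    j + 1 ≤ (A.filter (· < x)).card := by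
  have : (Finset.range (j+1)).card ≤ (A.filter (· < x)).card := by
    apply Finset.card_le_card_of_injOn (fun i => nthSmallest A i)
    · intro i hi
      simp only [Finset.coe_range, Set.mem_Iio, Finset.mem_coe] at hi ⊢
      have hi' : i < A.card := by omega
      refine Finset.mem_filter.2 ⟨nth_mem hi', ?_⟩
      exact lt_of_le_of_lt (nth_le_nth (by omega) hj) h
    · intro i hi k hk hik
      rw [Finset.coe_range, Set.mem_Iio] at hi hk
      by_contra hne
      rcases lt_or_gt_of_ne hne with hl | hl
      · exact absurd hik (nth_lt_nth hl (by omega)).ne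
      · exact absurd hik.symm (nth_lt_nth hl (by omega)).ne
  simpa using this

/-- direction A -/

lemma nth_lt_of_filter_card {A : Finset ℕ} {j x : ℕ} (hj : j < A.card)
    (h : j + 1 ≤ (A.filter (· < x)).card) : nthSmallest A j < x := by
  by_contra hc
  push_neg at hc
  have hsub : A.filter (· < x) ⊆ (Finset.range j).image (nthSmallest A) := by
    intro b hb
    rw [Finset.mem_filter] at hb
    obtain ⟨i, hi, rfl⟩ := exists_nth hb.1
    refine Finset.mem_image.2 ⟨i, Finset.mem_range.2 ?_, rfl⟩
    by_contra hij
    push_neg at hij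
    exact absurd (lt_of_lt_of_le hb.2 hc) (not_lt.2 (nth_le_nth hij hi))
  have h1 := Finset.card_le_card hsub
  have h2 : ((Finset.range j).image (nthSmallest A)).card ≤ j := by
    simpa using Finset.card_image_le (s := Finset.range j) (f := nthSmallest A)
  omega

theorem greedy_def (R S : Finset ℕ) (i : ℕ) :
    greedy R S i
      = WithBot.unbotD 0 ((R.filter fun j => j < i ∧ ∀ i' ∈ S, i' < i → j ≠ greedy R S i').max) := by
  rw [greedy, Nat.strongRecOn_eq]
  rfl

/-- key counting lemma: strictly below any `s ∈ S`, `R` has strictly more elements. -/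

lemma L1 {R S : Finset ℕ} (h : TableauCond R S) {s : ℕ} (hs : s ∈ S) :
    (S.filter (· < s)).card + 1 ≤ (R.filter (· < s)).card := by
  set j := (S.filter (· < s)).card with hjdef
  have hjS : j < S.card := by
    have hsub : S.filter (· < s) ⊆ S.erase s := by
      intro b hb
      rw [Finset.mem_filter] at hb
      exact Finset.mem_erase.2 ⟨hb.2.ne, hb.1⟩
    have := Finset.card_le_card hsub
    rw [Finset.card_erase_of_mem hs] at this
    have : 0 < S.card := Finset.card_pos.2 ⟨s, hs⟩
    omega
  have hnthS : nthSmallest S j ≤ s := by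
    by_contra hc
    push_neg at hc
    have hsub : insert s (S.filter (· < s)) ⊆ S.filter (· < nthSmallest S j) := by
      intro b hb
      rcases Finset.mem_insert.1 hb with rfl | hb
      · exact Finset.mem_filter.2 ⟨hs, hc⟩
      · rw [Finset.mem_filter] at hb ⊢
        exact ⟨hb.1, hb.2.trans hc⟩
    have hcard : j + 1 ≤ (S.filter (· < nthSmallest S j)).card := by
      have := Finset.card_le_card hsub
      rwa [Finset.card_insert_of_notMem (by simp)] at this
    exact absurd (nth_lt_of_filter_card hjS hcard) (lt_irrefl _)
  have hRj : nthSmallest R j < s := lt_of_lt_of_le (h.2 j hjS) hnthS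
  exact le_filter_card (lt_of_lt_of_le hjS h.1) hRj

lemma greedy_mem_filter {R S : Finset ℕ} (h : TableauCond R S) {s : ℕ} (hs : s ∈ S) :
    greedy R S s ∈ R.filter fun b => b < s ∧ ∀ i' ∈ S, i' < s → b ≠ greedy R S i' := by
  set F := R.filter fun b => b < s ∧ ∀ i' ∈ S, i' < s → b ≠ greedy R S i' with hF
  have hne : F.Nonempty := by
    set E := (S.filter (· < s)).image (greedy R S) with hE
    have hEcard : E.card ≤ (S.filter (· < s)).card := Finset.card_image_le
    have hsub : (R.filter (· < s)) \ E ⊆ F := by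
      intro b hb
      rw [Finset.mem_sdiff, Finset.mem_filter] at hb
      refine Finset.mem_filter.2 ⟨hb.1.1, hb.1.2, ?_⟩
      intro i' hi' hlt heq
      exact hb.2 (Finset.mem_image.2 ⟨i', Finset.mem_filter.2 ⟨hi', hlt⟩, heq.symm⟩)
    have h1 := L1 h hs
    have h2 : (R.filter (· < s)).card - E.card ≤ ((R.filter (· < s)) \ E).card := by
      have := Finset.le_card_sdiff E (R.filter (· < s))
      omega
    have := Finset.card_le_card hsub
    rw [← Finset.card_pos]
    omega
  have hmax : F.max = (F.max' hne : ℕ) := (Finset.coe_max' hne).symm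
  rw [greedy_def, ← hF, hmax]
  exact (WithBot.unbotD_coe _ _) ▸ F.max'_mem hne

lemma greedy_mem {R S : Finset ℕ} (h : TableauCond R S) {s : ℕ} (hs : s ∈ S) :
    greedy R S s ∈ R := (Finset.mem_filter.1 (greedy_mem_filter h hs)).1

lemma greedy_lt {R S : Finset ℕ} (h : TableauCond R S) {s : ℕ} (hs : s ∈ S) :
    greedy R S s < s := (Finset.mem_filter.1 (greedy_mem_filter h hs)).2.1

lemma greedy_injOn {R S : Finset ℕ} (h : TableauCond R S) {s t : ℕ} (hs : s ∈ S) (ht : t ∈ S)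
    (heq : greedy R S s = greedy R S t) : s = t := by
  by_contra hne
  rcases lt_or_gt_of_ne hne with hl | hl
  · exact (Finset.mem_filter.1 (greedy_mem_filter h ht)).2.2 s hs hl heq.symm
  · exact (Finset.mem_filter.1 (greedy_mem_filter h hs)).2.2 t ht hl heq

lemma greedy_image {R S : Finset ℕ} (h : TableauCond R S) (hcard : R.card ≤ S.card) :
    S.image (greedy R S) = R := by
  apply Finset.eq_of_subset_of_card_le
  · intro b hb
    obtain ⟨s, hs, rfl⟩ := Finset.mem_image.1 hb
    exact greedy_mem h hs
  · have : (S.image (greedy R S)).card = S.card :=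
      Finset.card_image_of_injOn fun s hs t ht => greedy_injOn h hs ht
    omega

lemma tc_of_inj {R S : Finset ℕ} (hcard : S.card ≤ R.card) (φ : ℕ → ℕ)
    (hmem : ∀ s ∈ S, φ s ∈ R) (hlt : ∀ s ∈ S, φ s < s)
    (hinj : ∀ s ∈ S, ∀ t ∈ S, φ s = φ t → s = t) : TableauCond R S := by
  refine ⟨hcard, fun j hj => ?_⟩
  set s := nthSmallest S j with hsdef
  have hsS : s ∈ S := nth_mem hj
  have h1 : j + 1 ≤ (S.filter (· < s + 1)).card :=
    le_filter_card hj (by omega)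
  have h2 : j + 1 ≤ (R.filter (· < s)).card := by
    have hsub : (S.filter (· < s + 1)).image φ ⊆ R.filter (· < s) := by
      intro b hb
      obtain ⟨t, ht, rfl⟩ := Finset.mem_image.1 hb
      rw [Finset.mem_filter] at ht
      refine Finset.mem_filter.2 ⟨hmem t ht.1, ?_⟩
      have := hlt t ht.1
      omega
    have hic : ((S.filter (· < s + 1)).image φ).card = (S.filter (· < s + 1)).card := by
      apply Finset.card_image_of_injOn
      intro u hu v hv
      exact hinj u (Finset.mem_filter.1 hu).1 v (Finset.mem_filter.1 hv).1
    have := Finset.card_le_card hsub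
    omega
  exact nth_lt_of_filter_card (lt_of_lt_of_le hj hcard) h2

/-- Jeu-de-taquin promotion of a standard Young tableau of shape `3 × n`: `1` lies on the
bottom row; there is a unique `a ∈ M` with `f₁(a) = 1`; the set `{t ∈ T : f₂(t) ≤ a}` is
nonempty; and, with `x` its maximum, the triple
`B' = {b − 1 : b ∈ (B \ {1}) ∪ {a}}`, `M' = {m − 1 : m ∈ (M \ {a}) ∪ {x}}`,
`T' = {t − 1 : t ∈ T \ {x}} ∪ {3n}` is again a standard Young tableau of shape `3 × n`. -/
theorem promotion_is_SYT (n : ℕ) (hn : 1 ≤ n) (B M T : Finset ℕ)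
    (h : ThreeRowSYT (3 * n) B M T)
    (hB : B.card = n) (hM : M.card = n) (hT : T.card = n) :
    1 ∈ B ∧
    (∃! a, a ∈ M ∧ greedy B M a = 1) ∧
    ∀ a ∈ M, greedy B M a = 1 →
      (T.filter fun t => greedy M T t ≤ a).Nonempty ∧
      ∀ x ∈ T, greedy M T x ≤ a → (∀ t ∈ T, greedy M T t ≤ a → t ≤ x) →
        (ThreeRowSYT (3 * n)
            ((B.erase 1 ∪ {a}).image fun b => b - 1)
            ((M.erase a ∪ {x}).image fun m => m - 1)
            (((T.erase x).image fun t => t - 1) ∪ {3 * n}) ∧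
          ((B.erase 1 ∪ {a}).image fun b => b - 1).card = n ∧
          ((M.erase a ∪ {x}).image fun m => m - 1).card = n ∧
          (((T.erase x).image fun t => t - 1) ∪ {3 * n}).card = n) := by
  obtain ⟨hBM, hBT, hMT, hU, hTM, hMB, tcBM, tcMT⟩ := h
  have hrange : ∀ k, k ∈ B ∪ M ∪ T ↔ (1 ≤ k ∧ k ≤ 3*n) := by
    intro k; rw [hU, Finset.mem_Icc]
  have hBr : ∀ b ∈ B, 1 ≤ b ∧ b ≤ 3*n := fun b hb =>
    (hrange b).1 (Finset.mem_union_left _ (Finset.mem_union_left _ hb))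
  have hMr : ∀ m ∈ M, 1 ≤ m ∧ m ≤ 3*n := fun m hm =>
    (hrange m).1 (Finset.mem_union_left _ (Finset.mem_union_right _ hm))
  have hTr : ∀ t ∈ T, 1 ≤ t ∧ t ≤ 3*n := fun t ht =>
    (hrange t).1 (Finset.mem_union_right _ ht)
  have h1B : 1 ∈ B := by
    have h1 : (1:ℕ) ∈ B ∪ M ∪ T := (hrange 1).2 ⟨le_rfl, by omega⟩
    rcases Finset.mem_union.1 h1 with h' | h1T
    · rcases Finset.mem_union.1 h' with h1B | h1M
      · exact h1B
      · have hl := greedy_lt tcBM h1M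
        have hm := greedy_mem tcBM h1M
        have := hBr _ hm; omega
    · have hl := greedy_lt tcMT h1T
      have hm := greedy_mem tcMT h1T
      have := hMr _ hm; omega
  have h1M : 1 ∉ M := Finset.disjoint_left.1 hBM h1B
  have h1T : 1 ∉ T := Finset.disjoint_left.1 hBT h1B
  have hM2 : ∀ m ∈ M, 2 ≤ m := by
    intro m hm
    have := hMr m hm
    have : m ≠ 1 := fun hh => h1M (hh ▸ hm)
    omega
  have hT2 : ∀ t ∈ T, 2 ≤ t := by
    intro t ht
    have := hTr t ht
    have : t ≠ 1 := fun hh => h1T (hh ▸ ht)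
    omega
  have himgB : M.image (greedy B M) = B := greedy_image tcBM (by omega)
  have himgM : T.image (greedy M T) = M := greedy_image tcMT (by omega)
  have hex : ∃ a ∈ M, greedy B M a = 1 := by
    have : (1:ℕ) ∈ M.image (greedy B M) := by rw [himgB]; exact h1B
    obtain ⟨a0, ha0M, ha0⟩ := Finset.mem_image.1 this
    exact ⟨a0, ha0M, ha0⟩
  refine ⟨h1B, ?_, ?_⟩
  · obtain ⟨a0, ha0M, ha0⟩ := hex
    exact ⟨a0, ⟨ha0M, ha0⟩, fun a' ha' => greedy_injOn tcBM ha'.1 ha0M (ha'.2.trans ha0.symm)⟩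
  intro a haM ha1
  constructor
  · have : a ∈ T.image (greedy M T) := by rw [himgM]; exact haM
    obtain ⟨t0, ht0T, ht0⟩ := Finset.mem_image.1 this
    exact ⟨t0, Finset.mem_filter.2 ⟨ht0T, le_of_eq ht0⟩⟩
  intro x hxT hxa hmax
  have haB : a ∉ B := Finset.disjoint_right.1 hBM haM
  have haT : a ∉ T := Finset.disjoint_left.1 hMT haM
  have hxM : x ∉ M := Finset.disjoint_right.1 hMT hxT
  have hxB : x ∉ B := Finset.disjoint_right.1 hBT hxT
  have ha2 : 2 ≤ a := hM2 a haM
  have hx2 : 2 ≤ x := hT2 x hxT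
  have ha3 : a ≤ 3*n := (hMr a haM).2
  have hx3 : x ≤ 3*n := (hTr x hxT).2
  -- the key order fact
  have hax : a < x := by
    by_contra hc
    push_neg at hc
    have hxa' : x < a := lt_of_le_of_ne hc (fun hh => hxM (hh ▸ haM))
    set A := T.filter (fun t => greedy M T t ≤ a) with hA
    have hAimg : A.image (greedy M T) = M.filter (· ≤ a) := by
      apply Finset.Subset.antisymm
      · intro m hm
        obtain ⟨t, ht, rfl⟩ := Finset.mem_image.1 hm
        rw [hA, Finset.mem_filter] at ht
        exact Finset.mem_filter.2 ⟨greedy_mem tcMT ht.1, ht.2⟩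
      · intro m hm
        rw [Finset.mem_filter] at hm
        have : m ∈ T.image (greedy M T) := by rw [himgM]; exact hm.1
        obtain ⟨t, htT, rfl⟩ := Finset.mem_image.1 this
        exact Finset.mem_image.2 ⟨t, Finset.mem_filter.2 ⟨htT, hm.2⟩, rfl⟩
    have hc1 : (M.filter (· ≤ a)).card = A.card := by
      rw [← hAimg]
      exact Finset.card_image_of_injOn fun s hs t ht =>
        greedy_injOn tcMT (Finset.mem_filter.1 hs).1 (Finset.mem_filter.1 ht).1
    have hc2 : A.card ≤ (T.filter (· ≤ x)).card := by
      apply Finset.card_le_card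
      intro t ht
      rw [hA, Finset.mem_filter] at ht
      exact Finset.mem_filter.2 ⟨ht.1, hmax t ht.1 ht.2⟩
    have hc3 : (T.filter (· ≤ x)).card ≤ (M.filter (· ≤ x)).card := by
      apply Finset.card_le_card_of_injOn (greedy M T)
      · intro t ht
        rw [Finset.mem_coe, Finset.mem_filter] at ht
        have := greedy_lt tcMT ht.1
        exact Finset.mem_filter.2 ⟨greedy_mem tcMT ht.1, by omega⟩
      · intro s hs t ht
        exact greedy_injOn tcMT (Finset.mem_filter.1 (by exact_mod_cast hs)).1
          (Finset.mem_filter.1 (by exact_mod_cast ht)).1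
    have hc4 : M.filter (· ≤ x) ⊆ (M.filter (· ≤ a)).erase a := by
      intro m hm
      rw [Finset.mem_filter] at hm
      refine Finset.mem_erase.2 ⟨by omega, Finset.mem_filter.2 ⟨hm.1, by omega⟩⟩
    have hc5 : a ∈ M.filter (· ≤ a) := Finset.mem_filter.2 ⟨haM, le_rfl⟩
    have hc6 := Finset.card_le_card hc4
    rw [Finset.card_erase_of_mem hc5] at hc6
    have hc7 : 1 ≤ (M.filter (· ≤ a)).card := Finset.card_pos.2 ⟨a, hc5⟩
    omega
  -- abbreviations
  set B2 := B.erase 1 ∪ {a} with hB2def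
  set M2 := M.erase a ∪ {x} with hM2def
  set T2 := T.erase x with hT2def
  have hmemB2 : ∀ b ∈ B2, 2 ≤ b ∧ b ≤ 3*n := by
    intro b hb
    rcases Finset.mem_union.1 hb with h' | h'
    · obtain ⟨hne, hbB⟩ := Finset.mem_erase.1 h'
      have := hBr b hbB; omega
    · rw [Finset.mem_singleton] at h'; omega
  have hmemM2 : ∀ m ∈ M2, 2 ≤ m ∧ m ≤ 3*n := by
    intro m hm
    rcases Finset.mem_union.1 hm with h' | h'
    · have hmM := Finset.mem_of_mem_erase h'
      exact ⟨hM2 m hmM, (hMr m hmM).2⟩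
    · rw [Finset.mem_singleton] at h'; omega
  have hmemT2 : ∀ t ∈ T2, 2 ≤ t ∧ t ≤ 3*n := by
    intro t ht
    have htT := Finset.mem_of_mem_erase ht
    exact ⟨hT2 t htT, (hTr t htT).2⟩
  have shift_mem : ∀ (X : Finset ℕ), (∀ b ∈ X, 2 ≤ b ∧ b ≤ 3*n) →
      ∀ y, (y ∈ X.image (fun b => b - 1) ↔ y + 1 ∈ X) := by
    intro X hX y
    constructor
    · intro hy
      obtain ⟨b, hb, rfl⟩ := Finset.mem_image.1 hy
      have := hX b hb
      have hbb : b - 1 + 1 = b := by omega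
      rwa [hbb]
    · intro hy
      exact Finset.mem_image.2 ⟨y+1, hy, by omega⟩
  have shift_card : ∀ (X : Finset ℕ), (∀ b ∈ X, 2 ≤ b ∧ b ≤ 3*n) →
      (X.image (fun b => b - 1)).card = X.card := by
    intro X hX
    apply Finset.card_image_of_injOn
    intro b hb c hc hbc
    have hbc' : b - 1 = c - 1 := hbc
    have := hX b hb; have := hX c hc
    omega
  -- cardinalities
  have hB2card : B2.card = n := by
    rw [hB2def, Finset.card_union_of_disjoint
      (Finset.disjoint_singleton_right.2 (fun hh => haB (Finset.mem_of_mem_erase hh))),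
      Finset.card_erase_of_mem h1B, hB, Finset.card_singleton]
    omega
  have hM2card : M2.card = n := by
    rw [hM2def, Finset.card_union_of_disjoint
      (Finset.disjoint_singleton_right.2 (fun hh => hxM (Finset.mem_of_mem_erase hh))),
      Finset.card_erase_of_mem haM, hM, Finset.card_singleton]
    omega
  have hT2card : T2.card = n - 1 := by
    rw [hT2def, Finset.card_erase_of_mem hxT, hT]
  have hBpcard : (B2.image (fun b => b - 1)).card = n := by rw [shift_card B2 hmemB2, hB2card]
  have hMpcard : (M2.image (fun m => m - 1)).card = n := by rw [shift_card M2 hmemM2, hM2card]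
  have h3nTp : 3*n ∉ T2.image (fun t => t - 1) := by
    intro hh
    rw [shift_mem T2 hmemT2] at hh
    have := hmemT2 _ hh
    omega
  have hTpcard : (T2.image (fun t => t - 1) ∪ {3*n}).card = n := by
    rw [Finset.card_union_of_disjoint (Finset.disjoint_singleton_right.2 h3nTp),
      shift_card T2 hmemT2, hT2card, Finset.card_singleton]
    omega
  -- union
  have hUnion2 : ∀ k, (k ∈ B2 ∨ k ∈ M2 ∨ k ∈ T2) ↔ (2 ≤ k ∧ k ≤ 3*n) := by
    intro k
    constructor
    · rintro (hk | hk | hk)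
      · exact hmemB2 k hk
      · exact hmemM2 k hk
      · exact hmemT2 k hk
    · rintro ⟨hk2, hk3⟩
      have : k ∈ B ∪ M ∪ T := (hrange k).2 ⟨by omega, hk3⟩
      rcases Finset.mem_union.1 this with h' | hkT
      · rcases Finset.mem_union.1 h' with hkB | hkM
        · exact Or.inl (Finset.mem_union_left _ (Finset.mem_erase.2 ⟨by omega, hkB⟩))
        · by_cases hka : k = a
          · exact Or.inl (Finset.mem_union_right _ (by rw [hka]; exact Finset.mem_singleton_self a))
          · exact Or.inr (Or.inl (Finset.mem_union_left _ (Finset.mem_erase.2 ⟨hka, hkM⟩)))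
      · by_cases hkx : k = x
        · exact Or.inr (Or.inl (Finset.mem_union_right _ (by rw [hkx]; exact Finset.mem_singleton_self x)))
        · exact Or.inr (Or.inr (Finset.mem_erase.2 ⟨hkx, hkT⟩))
  have hUnionP : (B2.image (fun b => b - 1)) ∪ (M2.image (fun m => m - 1)) ∪
      ((T2.image (fun t => t - 1)) ∪ {3*n}) = Finset.Icc 1 (3*n) := by
    ext y
    simp only [Finset.mem_union, Finset.mem_singleton, Finset.mem_Icc,
      shift_mem B2 hmemB2, shift_mem M2 hmemM2, shift_mem T2 hmemT2]
    have hk := hUnion2 (y+1)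
    constructor
    · rintro ((hy | hy) | hy | hy)
      · have := hk.1 (Or.inl hy); omega
      · have := hk.1 (Or.inr (Or.inl hy)); omega
      · have := hk.1 (Or.inr (Or.inr hy)); omega
      · omega
    · rintro ⟨h1, h3⟩
      by_cases hy3 : y = 3*n
      · exact Or.inr (Or.inr hy3)
      · rcases hk.2 ⟨by omega, by omega⟩ with hy | hy | hy
        · exact Or.inl (Or.inl hy)
        · exact Or.inl (Or.inr hy)
        · exact Or.inr (Or.inl hy)
  -- disjointness of the unshifted sets
  have hd2BM : ∀ k, k ∈ B2 → k ∈ M2 → False := by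
    intro k hkB hkM
    rcases Finset.mem_union.1 hkB with h' | h' <;>
      rcases Finset.mem_union.1 hkM with h'' | h''
    · exact Finset.disjoint_left.1 hBM (Finset.mem_of_mem_erase h') (Finset.mem_of_mem_erase h'')
    · rw [Finset.mem_singleton] at h''
      exact hxB (h'' ▸ Finset.mem_of_mem_erase h')
    · rw [Finset.mem_singleton] at h'
      exact (Finset.mem_erase.1 h'').1 h'
    · rw [Finset.mem_singleton] at h' h''
      exact hxM (h'' ▸ h' ▸ haM)
  have hd2BT : ∀ k, k ∈ B2 → k ∈ T2 → False := by
    intro k hkB hkT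
    have hkT' := Finset.mem_of_mem_erase hkT
    rcases Finset.mem_union.1 hkB with h' | h'
    · exact Finset.disjoint_left.1 hBT (Finset.mem_of_mem_erase h') hkT'
    · rw [Finset.mem_singleton] at h'
      exact haT (h' ▸ hkT')
  have hd2MT : ∀ k, k ∈ M2 → k ∈ T2 → False := by
    intro k hkM hkT
    have hkT' := Finset.mem_of_mem_erase hkT
    rcases Finset.mem_union.1 hkM with h' | h'
    · exact Finset.disjoint_left.1 hMT (Finset.mem_of_mem_erase h') hkT'
    · rw [Finset.mem_singleton] at h'
      exact (Finset.mem_erase.1 hkT).1 h'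
  -- disjointness of shifted sets
  have hdPBM : Disjoint (B2.image (fun b => b - 1)) (M2.image (fun m => m - 1)) := by
    rw [Finset.disjoint_left]
    intro y hy hy'
    rw [shift_mem B2 hmemB2] at hy
    rw [shift_mem M2 hmemM2] at hy'
    exact hd2BM _ hy hy'
  have h3nBp : 3*n ∉ B2.image (fun b => b - 1) := by
    intro hh
    rw [shift_mem B2 hmemB2] at hh
    have := hmemB2 _ hh; omega
  have h3nMp : 3*n ∉ M2.image (fun m => m - 1) := by
    intro hh
    rw [shift_mem M2 hmemM2] at hh
    have := hmemM2 _ hh; omega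
  have hdPBT : Disjoint (B2.image (fun b => b - 1)) ((T2.image (fun t => t - 1)) ∪ {3*n}) := by
    rw [Finset.disjoint_left]
    intro y hy hy'
    rcases Finset.mem_union.1 hy' with h' | h'
    · rw [shift_mem B2 hmemB2] at hy
      rw [shift_mem T2 hmemT2] at h'
      exact hd2BT _ hy h'
    · rw [Finset.mem_singleton] at h'
      exact h3nBp (h' ▸ hy)
  have hdPMT : Disjoint (M2.image (fun m => m - 1)) ((T2.image (fun t => t - 1)) ∪ {3*n}) := by
    rw [Finset.disjoint_left]
    intro y hy hy'
    rcases Finset.mem_union.1 hy' with h' | h'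
    · rw [shift_mem M2 hmemM2] at hy
      rw [shift_mem T2 hmemT2] at h'
      exact hd2MT _ hy h'
    · rw [Finset.mem_singleton] at h'
      exact h3nMp (h' ▸ hy)
  -- tableau condition B' M'
  have hM2cases : ∀ y, y + 1 ∈ M2 → (y + 1 = x) ∨ (y + 1 ∈ M ∧ y + 1 ≠ a ∧ y + 1 ≠ x) := by
    intro y hy
    rcases Finset.mem_union.1 hy with h' | h'
    · right
      have h1 := Finset.mem_of_mem_erase h'
      exact ⟨h1, (Finset.mem_erase.1 h').1, fun hh => hxM (hh ▸ h1)⟩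
    · left; exact Finset.mem_singleton.1 h'
  have tcP1 : TableauCond (B2.image (fun b => b - 1)) (M2.image (fun m => m - 1)) := by
    apply tc_of_inj (by rw [hBpcard, hMpcard])
      (fun y => (if y + 1 = x then a else greedy B M (y+1)) - 1)
    · intro y hy
      rw [shift_mem M2 hmemM2] at hy
      rcases hM2cases y hy with hyx | ⟨hyM, hyna, hynx⟩
      · rw [if_pos hyx, shift_mem B2 hmemB2]
        have hh : a - 1 + 1 = a := by omega
        rw [hh]
        exact Finset.mem_union_right _ (Finset.mem_singleton_self a)
      · rw [if_neg hynx, shift_mem B2 hmemB2]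
        have hg := greedy_mem tcBM hyM
        have hg1 : greedy B M (y+1) ≠ 1 := fun hh =>
          hyna (greedy_injOn tcBM hyM haM (hh.trans ha1.symm))
        have hg2 := hBr _ hg
        have hh : greedy B M (y+1) - 1 + 1 = greedy B M (y+1) := by omega
        rw [hh]
        exact Finset.mem_union_left _ (Finset.mem_erase.2 ⟨hg1, hg⟩)
    · intro y hy
      rw [shift_mem M2 hmemM2] at hy
      rcases hM2cases y hy with hyx | ⟨hyM, hyna, hynx⟩
      · rw [if_pos hyx]; omega
      · rw [if_neg hynx]
        have hgl := greedy_lt tcBM hyM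
        have hg2 := hBr _ (greedy_mem tcBM hyM)
        omega
    · intro y1 hy1 y2 hy2 heq
      rw [shift_mem M2 hmemM2] at hy1 hy2
      rcases hM2cases y1 hy1 with hx1 | ⟨hM1, hna1, hnx1⟩ <;>
        rcases hM2cases y2 hy2 with hx2 | ⟨hM2', hna2, hnx2⟩
      · omega
      · rw [if_pos hx1, if_neg hnx2] at heq
        have hg2 := hBr _ (greedy_mem tcBM hM2')
        have : a = greedy B M (y2+1) := by omega
        exact absurd (this ▸ greedy_mem tcBM hM2') haB
      · rw [if_neg hnx1, if_pos hx2] at heq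
        have hg1 := hBr _ (greedy_mem tcBM hM1)
        have : a = greedy B M (y1+1) := by omega
        exact absurd (this ▸ greedy_mem tcBM hM1) haB
      · rw [if_neg hnx1, if_neg hnx2] at heq
        have hg1 := hBr _ (greedy_mem tcBM hM1)
        have hg2 := hBr _ (greedy_mem tcBM hM2')
        have : greedy B M (y1+1) = greedy B M (y2+1) := by omega
        have := greedy_injOn tcBM hM1 hM2' this
        omega
  -- tableau condition M' T'
  have hTpcases : ∀ y ∈ (T2.image (fun t => t - 1)) ∪ {3*n},
      y = 3*n ∨ (y + 1 ∈ T ∧ y + 1 ≠ x ∧ y ≠ 3*n) := by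
    intro y hy
    rcases Finset.mem_union.1 hy with h' | h'
    · right
      rw [shift_mem T2 hmemT2] at h'
      have htT := Finset.mem_of_mem_erase h'
      have := hTr _ htT
      exact ⟨htT, (Finset.mem_erase.1 h').1, by omega⟩
    · left; exact Finset.mem_singleton.1 h'
  have hval : ∀ t, t ∈ T → t ≠ x →
      ((if greedy M T t = a then greedy M T x else greedy M T t) ∈ M ∧
       (if greedy M T t = a then greedy M T x else greedy M T t) ≠ a ∧
       (if greedy M T t = a then greedy M T x else greedy M T t) < t ∧
       2 ≤ (if greedy M T t = a then greedy M T x else greedy M T t)) := by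
    intro t htT htx
    by_cases hta : greedy M T t = a
    · rw [if_pos hta]
      have hmem := greedy_mem tcMT hxT
      refine ⟨hmem, ?_, ?_, hM2 _ hmem⟩
      · intro hh
        exact htx (greedy_injOn tcMT htT hxT (hta.trans hh.symm))
      · have := greedy_lt tcMT htT
        omega
    · rw [if_neg hta]
      have hmem := greedy_mem tcMT htT
      exact ⟨hmem, hta, greedy_lt tcMT htT, hM2 _ hmem⟩
  have tcP2 : TableauCond (M2.image (fun m => m - 1)) ((T2.image (fun t => t - 1)) ∪ {3*n}) := by
    apply tc_of_inj (by rw [hMpcard, hTpcard])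
      (fun y => if y = 3*n then x - 1 else
        ((if greedy M T (y+1) = a then greedy M T x else greedy M T (y+1)) - 1))
    · intro y hy
      rcases hTpcases y hy with hy3 | ⟨hyT, hynx, hyn3⟩
      · rw [if_pos hy3, shift_mem M2 hmemM2]
        have hh : x - 1 + 1 = x := by omega
        rw [hh]
        exact Finset.mem_union_right _ (Finset.mem_singleton_self x)
      · rw [if_neg hyn3, shift_mem M2 hmemM2]
        obtain ⟨hv1, hv2, hv3, hv4⟩ := hval (y+1) hyT hynx
        have hh : (if greedy M T (y+1) = a then greedy M T x else greedy M T (y+1)) - 1 + 1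
            = (if greedy M T (y+1) = a then greedy M T x else greedy M T (y+1)) := by omega
        rw [hh]
        exact Finset.mem_union_left _ (Finset.mem_erase.2 ⟨hv2, hv1⟩)
    · intro y hy
      rcases hTpcases y hy with hy3 | ⟨hyT, hynx, hyn3⟩
      · rw [if_pos hy3]; omega
      · rw [if_neg hyn3]
        obtain ⟨hv1, hv2, hv3, hv4⟩ := hval (y+1) hyT hynx
        omega
    · intro y1 hy1 y2 hy2 heq
      rcases hTpcases y1 hy1 with h31 | ⟨hT1, hnx1, hn31⟩ <;>
        rcases hTpcases y2 hy2 with h32 | ⟨hT2', hnx2, hn32⟩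
      · omega
      · rw [if_pos h31, if_neg hn32] at heq
        obtain ⟨hv1, hv2, hv3, hv4⟩ := hval (y2+1) hT2' hnx2
        have : x = (if greedy M T (y2+1) = a then greedy M T x else greedy M T (y2+1)) := by omega
        exact absurd (this ▸ hv1) hxM
      · rw [if_neg hn31, if_pos h32] at heq
        obtain ⟨hv1, hv2, hv3, hv4⟩ := hval (y1+1) hT1 hnx1
        have : x = (if greedy M T (y1+1) = a then greedy M T x else greedy M T (y1+1)) := by omega
        exact absurd (this ▸ hv1) hxM
      · rw [if_neg hn31, if_neg hn32] at heq
        obtain ⟨hu1, hu2, hu3, hu4⟩ := hval (y1+1) hT1 hnx1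
        obtain ⟨hv1, hv2, hv3, hv4⟩ := hval (y2+1) hT2' hnx2
        have hvv : (if greedy M T (y1+1) = a then greedy M T x else greedy M T (y1+1))
            = (if greedy M T (y2+1) = a then greedy M T x else greedy M T (y2+1)) := by omega
        by_cases h1a : greedy M T (y1+1) = a <;> by_cases h2a : greedy M T (y2+1) = a
        · rw [if_pos h1a] at hvv; rw [if_pos h2a] at hvv
          have := greedy_injOn tcMT hT1 hT2' (h1a.trans h2a.symm)
          omega
        · rw [if_pos h1a, if_neg h2a] at hvv
          exact absurd (greedy_injOn tcMT hxT hT2' hvv).symm hnx2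
        · rw [if_neg h1a, if_pos h2a] at hvv
          exact absurd (greedy_injOn tcMT hT1 hxT hvv) hnx1
        · rw [if_neg h1a, if_neg h2a] at hvv
          have := greedy_injOn tcMT hT1 hT2' hvv
          omega
  exact ⟨⟨hdPBM, hdPBT, hdPMT, hUnionP, by rw [hTpcard, hMpcard], by rw [hMpcard, hBpcard],
    tcP1, tcP2⟩, hBpcard, hMpcard, hTpcard⟩
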